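/- Let t be a positive integer and assume l_p < t and l_c < t. Suppose that for every tuple (k,l,p,v,u) with 1 ≤ k ≤ p ≤ 2t, 1 ≤ l ≤ max(l_p,l_c), v ∈ V and u ∈ V∖B, a subfamily F̂_{k,l,p}^{vu} ⊆ F_{k,l,p}^{vu} is given that is (2t−p)-representative for F_{k,l,p}^{vu}. Then there exists a feasible path-cycle packing of total length at least t if and only if there exists a tuple (k,l,p,v,u) with F̂_{k,l,p}^{vu} ≠ ∅ such that either (t ≤ k ≤ p ≤ 2t, v ∈ B, u ∈ V∖B and l ≤ l_p) or (t ≤ k ≤ p ≤ 2t, v = u ∈ V∖B and l ≤ l_c). -/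

import Mathlib

/-- An element of a path-cycle packing: a list of vertices together with a flag
telling whether it is a cycle (`true`) or a path (`false`). -/
structure PCElem (V : Type*) where
  verts : List V
  isCycle : Bool

/-- A valid element w.r.t. the arc relation `A`: the vertices are distinct,
consecutive vertices are joined by arcs, there are at least two vertices
(so paths have length ≥ 1 and cycles have length ≥ 2), and for a cycle the
last vertex is joined back to the first. -/
def ValidElem {V : Type*} (A : V → V → Prop) (e : PCElem V) : Prop :=
  e.verts.Nodup ∧ e.verts.Chain' A ∧ 2 ≤ e.verts.length ∧
    (e.isCycle = true → ∀ h : e.verts ≠ [], A (e.verts.getLast h) (e.verts.head h))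

/-- The length (number of arcs) of an element: a cycle on `k` vertices has length `k`,
a path on `k` vertices has length `k - 1`. -/
def elemLen {V : Type*} (e : PCElem V) : ℕ :=
  if e.isCycle then e.verts.length else e.verts.length - 1

/-- The vertex set of an element. -/
def elemVerts {V : Type*} [DecidableEq V] (e : PCElem V) : Finset V :=
  e.verts.toFinset

/-- A path-cycle packing: a finite set of valid, pairwise vertex-disjoint
paths and cycles. -/
def IsPacking {V : Type*} [DecidableEq V] (A : V → V → Prop)
    (D : Finset (PCElem V)) : Prop :=
  (∀ e ∈ D, ValidElem A e) ∧
    (D : Set (PCElem V)).Pairwise fun e f => Disjoint (elemVerts e) (elemVerts f)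

/-- `c(D)`: the total length of a packing. -/
def packLen {V : Type*} (D : Finset (PCElem V)) : ℕ :=
  ∑ e ∈ D, elemLen e

/-- `V(D)`: the set of vertices appearing in a packing. -/
def packVerts {V : Type*} [DecidableEq V] (D : Finset (PCElem V)) : Finset V :=
  D.biUnion elemVerts

/-- A feasible path: starts at an altruistic vertex of `B` and has length at most `lp`. -/
def FeasPath {V : Type*} (B : Set V) (lp : ℕ) (e : PCElem V) : Prop :=
  e.isCycle = false ∧ (∃ b ∈ B, e.verts.head? = some b) ∧ e.verts.length - 1 ≤ lp

/-- A feasible cycle: contains no vertex of `B` and has length at most `lc`. -/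
def FeasCycle {V : Type*} (B : Set V) (lc : ℕ) (e : PCElem V) : Prop :=
  e.isCycle = true ∧ (∀ w ∈ e.verts, w ∉ B) ∧ e.verts.length ≤ lc

/-- A feasible element: a feasible path or a feasible cycle. -/
def FeasElem {V : Type*} (B : Set V) (lp lc : ℕ) (e : PCElem V) : Prop :=
  FeasPath B lp e ∨ FeasCycle B lc e

/-- A feasible path-cycle packing. -/
def FeasPacking {V : Type*} [DecidableEq V] (A : V → V → Prop) (B : Set V)
    (lp lc : ℕ) (D : Finset (PCElem V)) : Prop :=
  IsPacking A D ∧ ∀ e ∈ D, FeasElem B lp lc e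

/-- A semi-feasible element: a feasible path, a feasible cycle, or a path of
length at most `lc` containing no vertex of `B`. -/
def SemiElem {V : Type*} (B : Set V) (lp lc : ℕ) (e : PCElem V) : Prop :=
  FeasElem B lp lc e ∨
    (e.isCycle = false ∧ (∀ w ∈ e.verts, w ∉ B) ∧ e.verts.length - 1 ≤ lc)

/-- `e` is a `D_l^{vu}`: a path of length `l` from `v` to `u` when `v ≠ u`, and a
cycle of length `l` through `v` when `v = u`. -/
def IsDlvu {V : Type*} [DecidableEq V] (v u : V) (l : ℕ) (e : PCElem V) : Prop :=
  if v = u then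
    e.isCycle = true ∧ v ∈ e.verts ∧ e.verts.length = l
  else
    e.isCycle = false ∧ e.verts.head? = some v ∧ e.verts.getLast? = some u ∧
      e.verts.length = l + 1

/-- `F_{k,l}^{vu}`: the collection of vertex sets `V(D)` over all semi-feasible
packings `D = P ∪ C ∪ {D_l^{vu}}` with `c(D) = k`; the distinguished element
`D_l^{vu}` is semi-feasible and every other element is feasible. -/
def FF {V : Type*} [DecidableEq V] (A : V → V → Prop) (B : Set V) (lp lc : ℕ)
    (k l : ℕ) (v u : V) : Set (Finset V) :=
  { S | ∃ (D : Finset (PCElem V)) (e : PCElem V),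
      IsPacking A D ∧ e ∈ D ∧ IsDlvu v u l e ∧ SemiElem B lp lc e ∧
      (∀ f ∈ D, f ≠ e → FeasElem B lp lc f) ∧ packLen D = k ∧ packVerts D = S }

/-- `F ⊎ T = { X ∪ T : X ∈ F, X ∩ T = ∅ }` for a collection of finite sets. -/
def uplusS {V : Type*} [DecidableEq V] (F : Set (Finset V)) (T : Finset V) :
    Set (Finset V) :=
  { Z | ∃ X ∈ F, Disjoint X T ∧ Z = X ∪ T }

/-- `F_{k,l,p}^{vu}`: the members of `F_{k,l}^{vu}` of cardinality `p`. -/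
def FFp {V : Type*} [DecidableEq V] (A : V → V → Prop) (B : Set V) (lp lc : ℕ)
    (k l p : ℕ) (v u : V) : Set (Finset V) :=
  { S | S ∈ FF A B lp lc k l v u ∧ S.card = p }

/-- `Shat` is a `q`-representative subfamily of the family `S` of finite sets:
`Shat ⊆ S` and for every set `Y` of size at most `q`, if some `X ∈ S` is disjoint
from `Y`, then some `X̂ ∈ Shat` is disjoint from `Y`. -/
def IsRepS {V : Type*} [DecidableEq V] (q : ℕ) (Shat S : Set (Finset V)) : Prop :=
  Shat ⊆ S ∧ ∀ Y : Finset V, Y.card ≤ q →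
    (∃ X ∈ S, Disjoint X Y) → ∃ Xhat ∈ Shat, Disjoint Xhat Y


section AuxLemmas

private lemma head_ne_getLast_aux {α : Type*} {l : List α} (hn : l.Nodup)
    (hl : 2 ≤ l.length) (h : l ≠ []) : l.head h ≠ l.getLast h := by
  rw [List.head_eq_getElem_zero, List.getLast_eq_getElem]
  intro heq
  have := hn.getElem_inj_iff.1 heq
  omega

private lemma exists_arc_to_getLast_aux {α : Type*} {R : α → α → Prop} {l : List α}
    (hc : l.Chain' R) (hl : 2 ≤ l.length) (h : l ≠ []) :
    ∃ w, R w (l.getLast h) := by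
  obtain ⟨i, hi, hi2⟩ : ∃ i, i < l.length - 1 ∧ i + 1 = l.length - 1 :=
    ⟨l.length - 2, by omega, by omega⟩
  have h2 := List.isChain_iff_getElem.1 hc i (by omega)
  refine ⟨l.get ⟨i, by omega⟩, ?_⟩
  rw [List.getLast_eq_getElem]
  have he : l[l.length - 1]'(by omega) = l.get ⟨i + 1, by omega⟩ := by
    simp only [List.get_eq_getElem]
    congr 1
    omega
  rw [he]
  exact h2

end AuxLemmas

/-- (Lemma 7) Suppose for every tuple `(k,l,p,v,u)` with `1 ≤ k ≤ p ≤ 2t`,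
`1 ≤ l ≤ max l_p l_c`, `u ∉ B`, a `(2t-p)`-representative subfamily
`F̂_{k,l,p}^{vu}` of `F_{k,l,p}^{vu}` is given. Then, assuming `l_p, l_c < t`,
the instance is a yes-instance iff some `F̂_{k,l,p}^{vu}` with the stated index
conditions is nonempty. -/
theorem yes_iff_rep_nonempty {V : Type*} [Fintype V] [DecidableEq V]
    (A : V → V → Prop) (B : Set V) (lp lc t : ℕ)
    (hloop : ∀ v, ¬ A v v) (hB : ∀ v u, A v u → u ∉ B)
    (ht : 0 < t) (hlp : lp < t) (hlc : lc < t)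
    (Fhat : ℕ → ℕ → ℕ → V → V → Set (Finset V))
    (hrep : ∀ k l p : ℕ, ∀ v u : V,
      1 ≤ k → k ≤ p → p ≤ 2 * t → 1 ≤ l → l ≤ max lp lc → u ∉ B →
      IsRepS (2 * t - p) (Fhat k l p v u) (FFp A B lp lc k l p v u)) :
    (∃ D : Finset (PCElem V), FeasPacking A B lp lc D ∧ t ≤ packLen D) ↔
      (∃ (k l p : ℕ) (v u : V), (Fhat k l p v u).Nonempty ∧ 1 ≤ l ∧
        ((t ≤ k ∧ k ≤ p ∧ p ≤ 2 * t ∧ v ∈ B ∧ u ∉ B ∧ l ≤ lp) ∨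
         (t ≤ k ∧ k ≤ p ∧ p ≤ 2 * t ∧ v = u ∧ u ∉ B ∧ l ≤ lc))) := by
    classical
  constructor
  · rintro ⟨D, ⟨hDpack, hDfeas⟩, hDt⟩
    -- take a minimal-cardinality subpacking of total length ≥ t
    set SS := D.powerset.filter (fun D' => t ≤ packLen D') with hSSdef
    have hDSS : D ∈ SS := by
      simp only [hSSdef, Finset.mem_filter, Finset.mem_powerset]
      exact ⟨le_refl D, hDt⟩
    obtain ⟨D', hD'SS, hmin⟩ := SS.exists_min_image Finset.card ⟨D, hDSS⟩
    rw [hSSdef, Finset.mem_filter, Finset.mem_powerset] at hD'SS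
    obtain ⟨hsub, hk⟩ := hD'SS
    have hval : ∀ e ∈ D', ValidElem A e := fun e he => hDpack.1 e (hsub he)
    have hfeas : ∀ e ∈ D', FeasElem B lp lc e := fun e he => hDfeas e (hsub he)
    have hpack' : IsPacking A D' := ⟨hval, hDpack.2.mono (Finset.coe_subset.2 hsub)⟩
    have hermin : ∀ e ∈ D', packLen D' < t + elemLen e := by
      intro e he
      have h1 : packLen (D'.erase e) < t := by
        by_contra hge
        push_neg at hge
        have hmem : D'.erase e ∈ SS := by
          rw [hSSdef, Finset.mem_filter, Finset.mem_powerset]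
          exact ⟨(Finset.erase_subset e D').trans hsub, hge⟩
        have h2 := hmin _ hmem
        have h3 := Finset.card_erase_lt_of_mem he
        omega
      have h4 : packLen (D'.erase e) + elemLen e = packLen D' :=
        Finset.sum_erase_add _ _ he
      omega
    have hlen_lt : ∀ e ∈ D', elemLen e < t := by
      intro e he
      rcases hfeas e he with ⟨hc, _, hl⟩ | ⟨hc, _, hl⟩ <;>
        simp only [elemLen, hc, if_true, if_false, Bool.false_eq_true] <;> omega
    have hlen_max : ∀ e ∈ D', elemLen e ≤ max lp lc := by
      intro e he
      rcases hfeas e he with ⟨hc, _, hl⟩ | ⟨hc, _, hl⟩ <;>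
        simp only [elemLen, hc, if_true, if_false, Bool.false_eq_true] <;> omega
    have hlen1 : ∀ e ∈ D', 1 ≤ elemLen e := by
      intro e he
      have h2 := (hval e he).2.2.1
      unfold elemLen
      split <;> omega
    have hne : D'.Nonempty := by
      rcases D'.eq_empty_or_nonempty with h | h
      · rw [h] at hk; simp only [packLen, Finset.sum_empty] at hk; omega
      · exact h
    have hcardv : ∀ e ∈ D', (elemVerts e).card = e.verts.length := by
      intro e he
      exact List.toFinset_card_of_nodup (hval e he).1
    have hpcard : (packVerts D').card = ∑ e ∈ D', (elemVerts e).card := by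
      apply Finset.card_biUnion
      intro x hx y hy hxy
      exact hpack'.2 (Finset.mem_coe.2 hx) (Finset.mem_coe.2 hy) hxy
    have hlecard : ∀ e ∈ D',
        elemLen e ≤ (elemVerts e).card ∧ (elemVerts e).card ≤ elemLen e + 1 := by
      intro e he
      have h2 := (hval e he).2.2.1
      rw [hcardv e he]
      unfold elemLen
      split <;> omega
    have hkp : packLen D' ≤ (packVerts D').card := by
      rw [hpcard]
      exact Finset.sum_le_sum fun e he => (hlecard e he).1
    have hpk : (packVerts D').card ≤ packLen D' + D'.card := by
      rw [hpcard]
      calc ∑ e ∈ D', (elemVerts e).card ≤ ∑ e ∈ D', (elemLen e + 1) :=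
            Finset.sum_le_sum fun e he => (hlecard e he).2
        _ = packLen D' + D'.card := by
            rw [Finset.sum_add_distrib, Finset.sum_const, smul_eq_mul, mul_one]
            rfl
    obtain ⟨e1, he1⟩ := hne
    have hk2 : packLen D' + 2 ≤ 2 * t := by
      have h1 := hermin e1 he1
      have h2 := hlen_lt e1 he1
      omega
    have hmk : D'.card * (packLen D' - t + 1) ≤ packLen D' := by
      have := Finset.card_nsmul_le_sum D' elemLen (packLen D' - t + 1)
        (fun e he => by have := hermin e he; omega)
      simpa [smul_eq_mul, packLen] using this
    have hple : (packVerts D').card ≤ 2 * t := by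
      obtain ⟨s, hks⟩ : ∃ s, packLen D' = t + s := ⟨packLen D' - t, by omega⟩
      rw [hks] at hmk
      have hsimp : t + s - t + 1 = s + 1 := by omega
      rw [hsimp] at hmk
      have hst : s + 2 ≤ t := by omega
      have hmt : D'.card + s ≤ t := by nlinarith
      omega
    -- pieces about the distinguished element e1
    have hnil : e1.verts ≠ [] := by
      have h2 := (hval e1 he1).2.2.1
      intro h0
      rw [h0] at h2
      simp at h2
    set kk := packLen D' with hkk
    set pp := (packVerts D').card with hpp
    have h1k : 1 ≤ kk := le_trans ht hk
    rcases hfeas e1 he1 with hfp | hfc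
    · -- e1 is a feasible path
      obtain ⟨hcyc, ⟨b, hbB, hhead⟩, hplen⟩ := hfp
      set v := e1.verts.head hnil with hv
      set u := e1.verts.getLast hnil with hu
      have hvB : v ∈ B := by
        have h0 : e1.verts.head? = some v := List.head?_eq_head hnil
        rw [h0] at hhead
        rw [Option.some_inj.1 hhead]
        exact hbB
      have huB : u ∉ B := by
        obtain ⟨w, hw⟩ := exists_arc_to_getLast_aux (hval e1 he1).2.1
          (hval e1 he1).2.2.1 hnil
        exact hB w u hw
      have hvu : v ≠ u := fun h => huB (h ▸ hvB)
      set ll := elemLen e1 with hll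
      have hlleq : ll = e1.verts.length - 1 := by
        rw [hll]
        unfold elemLen
        rw [hcyc]
        simp
      have hdlvu : IsDlvu v u ll e1 := by
        unfold IsDlvu
        rw [if_neg hvu]
        have h2 := (hval e1 he1).2.2.1
        exact ⟨hcyc, List.head?_eq_head hnil, List.getLast?_eq_getLast hnil,
          by omega⟩
      have hmemFFp : packVerts D' ∈ FFp A B lp lc kk ll pp v u :=
        ⟨⟨D', e1, hpack', he1, hdlvu, Or.inl (Or.inl ⟨hcyc, ⟨b, hbB, hhead⟩, hplen⟩),
          fun f hf _ => hfeas f hf, rfl, rfl⟩, rfl⟩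
      obtain ⟨Xhat, hXhat, _⟩ := (hrep kk ll pp v u h1k hkp hple (hlen1 e1 he1)
        (hlen_max e1 he1) huB).2 ∅ (by simp)
        ⟨packVerts D', hmemFFp, Finset.disjoint_empty_right _⟩
      exact ⟨kk, ll, pp, v, u, ⟨Xhat, hXhat⟩, hlen1 e1 he1,
        Or.inl ⟨hk, hkp, hple, hvB, huB, by omega⟩⟩
    · -- e1 is a feasible cycle
      obtain ⟨hcyc, hnoB, hclen⟩ := hfc
      set v := e1.verts.head hnil with hv
      have hvB : v ∉ B := hnoB v (List.head_mem hnil)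
      set ll := elemLen e1 with hll
      have hlleq : ll = e1.verts.length := by
        rw [hll]
        unfold elemLen
        rw [hcyc]
        simp
      have hdlvu : IsDlvu v v ll e1 := by
        unfold IsDlvu
        rw [if_pos rfl]
        exact ⟨hcyc, List.head_mem hnil, hlleq.symm⟩
      have hmemFFp : packVerts D' ∈ FFp A B lp lc kk ll pp v v :=
        ⟨⟨D', e1, hpack', he1, hdlvu, Or.inl (Or.inr ⟨hcyc, hnoB, hclen⟩),
          fun f hf _ => hfeas f hf, rfl, rfl⟩, rfl⟩
      obtain ⟨Xhat, hXhat, _⟩ := (hrep kk ll pp v v h1k hkp hple (hlen1 e1 he1)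
        (hlen_max e1 he1) hvB).2 ∅ (by simp)
        ⟨packVerts D', hmemFFp, Finset.disjoint_empty_right _⟩
      exact ⟨kk, ll, pp, v, v, ⟨Xhat, hXhat⟩, hlen1 e1 he1,
        Or.inr ⟨hk, hkp, hple, rfl, hvB, by omega⟩⟩
  · rintro ⟨k, l, p, v, u, ⟨S, hS⟩, hl1, hcase⟩
    rcases hcase with ⟨htk, hkp, hp2t, hvB, huB, hllp⟩ |
      ⟨htk, hkp, hp2t, hvu, huB, hllc⟩
    · -- distinguished element is a path from v ∈ B to u ∉ B
      have hSmem := (hrep k l p v u (by omega) hkp hp2t hl1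
        (le_trans hllp (le_max_left lp lc)) huB).1 hS
      obtain ⟨⟨DD, e, hpack, heD, hdlvu, _, hothers, hlen, _⟩, _⟩ := hSmem
      have hvu : v ≠ u := fun h => huB (h ▸ hvB)
      rw [IsDlvu, if_neg hvu] at hdlvu
      obtain ⟨hcyc, hhead, _, hlenv⟩ := hdlvu
      have hefeas : FeasElem B lp lc e :=
        Or.inl ⟨hcyc, ⟨v, hvB, hhead⟩, by omega⟩
      refine ⟨DD, ⟨hpack, fun f hf => ?_⟩, by omega⟩
      by_cases hfe : f = e
      · rw [hfe]; exact hefeas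
      · exact hothers f hf hfe
    · -- distinguished element is a cycle through v = u ∉ B
      subst hvu
      have hSmem := (hrep k l p v v (by omega) hkp hp2t hl1
        (le_trans hllc (le_max_right lp lc)) huB).1 hS
      obtain ⟨⟨DD, e, hpack, heD, hdlvu, hsemi, hothers, hlen, _⟩, _⟩ := hSmem
      rw [IsDlvu, if_pos rfl] at hdlvu
      obtain ⟨hcyc, _, hlenv⟩ := hdlvu
      have hefeas : FeasElem B lp lc e := by
        rcases hsemi with (hfp | hfc) | ⟨hf, _, _⟩
        · rw [hfp.1] at hcyc; exact absurd hcyc (by simp)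
        · exact Or.inr hfc
        · rw [hf] at hcyc; exact absurd hcyc (by simp)
      refine ⟨DD, ⟨hpack, fun f hf => ?_⟩, by omega⟩
      by_cases hfe : f = e
      · rw [hfe]; exact hefeas
      · exact hothers f hf hfe
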